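/- Let K ≥ 2, d ≥ 1, γ > 0, and let D, Q be the Kd×Kd matrices defined from γ as below. Let U : ℝ^d → ℝ be twice continuously differentiable and suppose there are 0 < m ≤ L with 1 ≤ L such that m I_d ⪯ ∇²U(z) ⪯ L I_d for all z ∈ ℝ^d. For x = (x_1,…,x_K) ∈ (ℝ^d)^K define the Kd×Kd matrix J_b(x) := −(D+Q)·blockdiag(∇²U(x_1), I_d, …, I_d). Then for every x ∈ ℝ^{Kd}, ‖J_b(x)‖ ≤ L·max{1+2γ, 3γ}. -/

import Mathlib

open Matrix Kronecker

/-- The operator norm (induced by the Euclidean norms) of a real matrix. -/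
noncomputable def opNorm {m n : Type*} [Fintype m] [Fintype n] [DecidableEq n]
    (M : Matrix m n ℝ) : ℝ :=
  ‖LinearMap.toContinuousLinearMap (Matrix.toEuclideanLin M)‖

lemma opNorm_nonneg' {m n : Type*} [Fintype m] [Fintype n] [DecidableEq n]
    (M : Matrix m n ℝ) : 0 ≤ opNorm M := norm_nonneg _

lemma opNorm_le_of_mulVec {n m : Type*} [Fintype n] [Fintype m] [DecidableEq n]
    (M : Matrix m n ℝ) {c : ℝ} (hc : 0 ≤ c)
    (h : ∀ x : n → ℝ, ∑ i, (M *ᵥ x) i ^ 2 ≤ c ^ 2 * ∑ j, x j ^ 2) :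
    opNorm M ≤ c := by
  apply ContinuousLinearMap.opNorm_le_bound _ hc
  intro x
  rw [EuclideanSpace.norm_eq, EuclideanSpace.norm_eq]
  have h1 : ∀ i, ‖(LinearMap.toContinuousLinearMap (Matrix.toEuclideanLin M)) x i‖ ^ 2
      = ((M *ᵥ (fun j => x j)) i) ^ 2 := by
    intro i
    rw [Real.norm_eq_abs, sq_abs]
    rfl
  simp_rw [h1, Real.norm_eq_abs, sq_abs]
  calc √(∑ i, (M *ᵥ (fun j => x j)) i ^ 2) ≤ √(c ^ 2 * ∑ j, x j ^ 2) :=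
        Real.sqrt_le_sqrt (h _)
    _ = c * √(∑ j, x j ^ 2) := by
        rw [Real.sqrt_mul (sq_nonneg c), Real.sqrt_sq hc]

lemma opNorm_mul_le' {n : Type*} [Fintype n] [DecidableEq n] (M N : Matrix n n ℝ) :
    opNorm (M * N) ≤ opNorm M * opNorm N := by
  have h : LinearMap.toContinuousLinearMap (Matrix.toEuclideanLin (M * N))
      = (LinearMap.toContinuousLinearMap (Matrix.toEuclideanLin M)).comp
        (LinearMap.toContinuousLinearMap (Matrix.toEuclideanLin N)) := by
    ext x i
    show ((M * N) *ᵥ (fun j => x j)) i = (M *ᵥ (N *ᵥ (fun j => x j))) i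
    rw [Matrix.mulVec_mulVec]
  rw [opNorm, h]
  exact ContinuousLinearMap.opNorm_comp_le _ _

lemma opNorm_neg' {n m : Type*} [Fintype n] [Fintype m] [DecidableEq n] (M : Matrix m n ℝ) :
    opNorm (-M) = opNorm M := by
  rw [opNorm, map_neg, map_neg, norm_neg]
  rfl

lemma sum_ite_le {K : ℕ} {c : ℝ} (hc : 0 ≤ c) (P : Fin K → Prop) [DecidablePred P]
    (hP : ∀ j k, P j → P k → j = k) :
    ∑ j : Fin K, (if P j then c else 0) ≤ c := by
  rw [← Finset.sum_filter, Finset.sum_const]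
  have hcard : (Finset.univ.filter P).card ≤ 1 :=
    Finset.card_le_one.mpr (fun a ha b hb => hP a b (Finset.mem_filter.mp ha).2
      (Finset.mem_filter.mp hb).2)
  calc ((Finset.univ.filter P).card : ℕ) • c ≤ 1 • c := by
        apply smul_le_smul_of_nonneg_right _ hc
        exact_mod_cast hcard
    _ = c := one_smul _ _

lemma schur_bound {n : Type*} [Fintype n] [DecidableEq n] (M : Matrix n n ℝ) {r : ℝ} (hr : 0 ≤ r)
    (hrow : ∀ i, ∑ j, |M i j| ≤ r) (hcol : ∀ j, ∑ i, |M i j| ≤ r) :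
    opNorm M ≤ r := by
  apply opNorm_le_of_mulVec M hr
  intro x
  have key : ∀ i, (M *ᵥ x) i ^ 2 ≤ r * ∑ j, |M i j| * x j ^ 2 := by
    intro i
    have h0 : (M *ᵥ x) i = ∑ j, M i j * x j := rfl
    have h1 : (M *ᵥ x) i ^ 2 ≤ (∑ j, |M i j| * |x j|) ^ 2 := by
      rw [h0, ← sq_abs]
      apply pow_le_pow_left₀ (abs_nonneg _)
      calc |∑ j, M i j * x j| ≤ ∑ j, |M i j * x j| := Finset.abs_sum_le_sum_abs _ _
        _ = ∑ j, |M i j| * |x j| := by simp [abs_mul]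
    have h2 : (∑ j, |M i j| * |x j|) ^ 2 ≤ (∑ j, |M i j|) * (∑ j, |M i j| * x j ^ 2) := by
      have hcs := Finset.sum_mul_sq_le_sq_mul_sq Finset.univ
        (fun j => Real.sqrt |M i j|) (fun j => Real.sqrt |M i j| * |x j|)
      have e1 : ∀ j : n, Real.sqrt |M i j| * (Real.sqrt |M i j| * |x j|) = |M i j| * |x j| := by
        intro j
        rw [← mul_assoc, Real.mul_self_sqrt (abs_nonneg _)]
      have e2 : ∀ j : n, Real.sqrt |M i j| ^ 2 = |M i j| := fun j =>
        Real.sq_sqrt (abs_nonneg _)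
      have e3 : ∀ j : n, (Real.sqrt |M i j| * |x j|) ^ 2 = |M i j| * x j ^ 2 := by
        intro j
        rw [mul_pow, Real.sq_sqrt (abs_nonneg _), sq_abs]
      simp_rw [e1, e2, e3] at hcs
      exact hcs
    have h3 : (∑ j, |M i j|) * (∑ j, |M i j| * x j ^ 2) ≤ r * ∑ j, |M i j| * x j ^ 2 := by
      apply mul_le_mul_of_nonneg_right (hrow i)
      exact Finset.sum_nonneg fun j _ => mul_nonneg (abs_nonneg _) (sq_nonneg _)
    linarith
  calc ∑ i, (M *ᵥ x) i ^ 2 ≤ ∑ i, r * ∑ j, |M i j| * x j ^ 2 :=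
        Finset.sum_le_sum fun i _ => key i
    _ = r * ∑ j, (∑ i, |M i j|) * x j ^ 2 := by
        rw [← Finset.mul_sum, Finset.sum_comm]
        congr 1
        apply Finset.sum_congr rfl
        intro j _
        rw [Finset.sum_mul]
    _ ≤ r * ∑ j, r * x j ^ 2 := by
        apply mul_le_mul_of_nonneg_left _ hr
        apply Finset.sum_le_sum
        intro j _
        exact mul_le_mul_of_nonneg_right (hcol j) (sq_nonneg _)
    _ = r ^ 2 * ∑ j, x j ^ 2 := by rw [← Finset.mul_sum]; ring

lemma psd_cs {n : Type*} [Fintype n] (H : Matrix n n ℝ)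
    (hsym : ∀ u v : n → ℝ, u ⬝ᵥ H *ᵥ v = v ⬝ᵥ H *ᵥ u)
    (hpos : ∀ u : n → ℝ, 0 ≤ u ⬝ᵥ H *ᵥ u) (u v : n → ℝ) :
    (u ⬝ᵥ H *ᵥ v) ^ 2 ≤ (u ⬝ᵥ H *ᵥ u) * (v ⬝ᵥ H *ᵥ v) := by
  have key : ∀ t : ℝ, 0 ≤ (v ⬝ᵥ H *ᵥ v) * (t * t) + (2 * (u ⬝ᵥ H *ᵥ v)) * t + (u ⬝ᵥ H *ᵥ u) := by
    intro t
    have h0 := hpos (u + t • v)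
    have e : (u + t • v) ⬝ᵥ H *ᵥ (u + t • v)
        = (v ⬝ᵥ H *ᵥ v) * (t * t) + (2 * (u ⬝ᵥ H *ᵥ v)) * t + (u ⬝ᵥ H *ᵥ u) := by
      rw [Matrix.mulVec_add, Matrix.mulVec_smul]
      rw [add_dotProduct, smul_dotProduct]
      rw [dotProduct_add, dotProduct_add]
      rw [dotProduct_smul, dotProduct_smul]
      rw [hsym v u]
      simp only [smul_eq_mul]
      ring
    rw [e] at h0
    exact h0
  have hd := discrim_le_zero key
  rw [discrim] at hd
  nlinarith [hd]

lemma sym_sq_bound {n : Type*} [Fintype n] (H : Matrix n n ℝ) {L : ℝ} (hL : 0 ≤ L)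
    (hsym : ∀ u v : n → ℝ, u ⬝ᵥ H *ᵥ v = v ⬝ᵥ H *ᵥ u)
    (hpos : ∀ u : n → ℝ, 0 ≤ u ⬝ᵥ H *ᵥ u)
    (hupp : ∀ u : n → ℝ, u ⬝ᵥ H *ᵥ u ≤ L * (u ⬝ᵥ u)) (v : n → ℝ) :
    ∑ i, (H *ᵥ v) i ^ 2 ≤ L ^ 2 * ∑ i, v i ^ 2 := by
  have hsum : ∀ u : n → ℝ, ∑ i, u i ^ 2 = u ⬝ᵥ u := by
    intro u; simp [dotProduct, sq]
  rw [hsum, hsum]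
  set w := H *ᵥ v with hw
  have cs := psd_cs H hsym hpos w v
  have e : w ⬝ᵥ H *ᵥ v = w ⬝ᵥ w := rfl
  rw [e] at cs
  have hww : 0 ≤ w ⬝ᵥ w := by rw [← hsum]; positivity
  have hvv : 0 ≤ v ⬝ᵥ v := by rw [← hsum]; positivity
  rcases eq_or_lt_of_le hww with h0 | h0
  · have : (0:ℝ) ≤ L ^ 2 * (v ⬝ᵥ v) := by positivity
    linarith
  · have h1 : (w ⬝ᵥ H *ᵥ w) * (v ⬝ᵥ H *ᵥ v) ≤ (L * (w ⬝ᵥ w)) * (L * (v ⬝ᵥ v)) :=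
      mul_le_mul (hupp w) (hupp v) (hpos v) (by positivity)
    nlinarith [cs, h1, h0]

theorem stmt1 (K d : ℕ) (hK : 2 ≤ K) (hd : 1 ≤ d) (γ : ℝ) (hγ : 0 < γ)
    (Tγ : Matrix (Fin K) (Fin K) ℝ)
    (hT : ∀ i j : Fin K,
      Tγ i j =
        if (i : ℕ) + 1 = (j : ℕ) then (if (i : ℕ) = 0 then -1 else -γ)
        else if (j : ℕ) + 1 = (i : ℕ) then (if (j : ℕ) = 0 then 1 else γ)
        else 0)
    (D Q : Matrix (Fin K × Fin d) (Fin K × Fin d) ℝ)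
    (hD : D = (Matrix.diagonal fun i : Fin K => if (i : ℕ) = K - 1 then γ else 0) ⊗ₖ
        (1 : Matrix (Fin d) (Fin d) ℝ))
    (hQ : Q = Tγ ⊗ₖ (1 : Matrix (Fin d) (Fin d) ℝ))
    (U : EuclideanSpace ℝ (Fin d) → ℝ) (hU : ContDiff ℝ 2 U)
    (m L : ℝ) (hm : 0 < m) (hmL : m ≤ L) (hL1 : 1 ≤ L)
    -- `Hess z` is the Hessian matrix of `U` at `z`
    (Hess : EuclideanSpace ℝ (Fin d) → Matrix (Fin d) (Fin d) ℝ)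
    (hHess : ∀ z v w, iteratedFDeriv ℝ 2 U z ![v, w] =
      ∑ i, ∑ j, v i * Hess z i j * w j)
    -- `m I ⪯ ∇²U(z) ⪯ L I`
    (hlow : ∀ z, (Hess z - m • (1 : Matrix (Fin d) (Fin d) ℝ)).PosSemidef)
    (hupp : ∀ z, (L • (1 : Matrix (Fin d) (Fin d) ℝ) - Hess z).PosSemidef)
    -- `B z` is the block-diagonal matrix `blockdiag(∇²U(z), I, …, I)`
    (B : EuclideanSpace ℝ (Fin d) → Matrix (Fin K × Fin d) (Fin K × Fin d) ℝ)
    (hB : ∀ z p q, B z p q =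
      if p.1 = q.1 then
        (if (p.1 : ℕ) = 0 then Hess z p.2 q.2 else if p.2 = q.2 then 1 else 0)
      else 0)
    -- `Jb x` is the Jacobian `−(D+Q)·blockdiag(∇²U(x₁), I, …, I)`
    (Jb : (Fin K → EuclideanSpace ℝ (Fin d)) → Matrix (Fin K × Fin d) (Fin K × Fin d) ℝ)
    (hJb : ∀ x, Jb x = -((D + Q) * B (x ⟨0, by omega⟩))) :
    ∀ x, opNorm (Jb x) ≤ L * max (1 + 2 * γ) (3 * γ) := by
  set C := max (1 + 2 * γ) (3 * γ) with hCdef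
  have hC1 : (1 : ℝ) + 2 * γ ≤ C := le_max_left _ _
  have hC2 : 3 * γ ≤ C := le_max_right _ _
  have hC0 : (0 : ℝ) ≤ C := by linarith
  have hL0 : (0 : ℝ) ≤ L := by linarith
  -- Schur bound for D + Q
  have hDQ : ∀ p q : Fin K × Fin d, (D + Q) p q
      = (Tγ p.1 q.1 + (if p.1 = q.1 ∧ (p.1 : ℕ) = K - 1 then γ else 0))
        * (if p.2 = q.2 then 1 else 0) := by
    intro p q
    rw [Matrix.add_apply, hD, hQ, Matrix.kroneckerMap_apply, Matrix.kroneckerMap_apply,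
      Matrix.diagonal_apply]
    simp only [Matrix.one_apply]
    split_ifs <;> try ring1
    all_goals (exfalso; tauto)
  have habs : ∀ i j : Fin K,
      |Tγ i j + (if i = j ∧ (i : ℕ) = K - 1 then γ else 0)|
        ≤ (if (j : ℕ) = (i : ℕ) + 1 then (if (i : ℕ) = 0 then 1 else γ) else 0)
          + (if (j : ℕ) + 1 = (i : ℕ) then (if (i : ℕ) = 1 then 1 else γ) else 0)
          + (if j = i ∧ (i : ℕ) = K - 1 then γ else 0) := by
    intro i j
    rw [hT i j]
    simp only [Fin.ext_iff]
    split_ifs <;>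
      first
        | (exfalso; omega)
        | simp [abs_of_pos hγ, abs_neg, abs_of_nonneg, hγ.le]
        | (simp [abs_of_pos hγ, abs_neg, abs_of_nonneg, hγ.le]; linarith)
  have hTsym : ∀ i j : Fin K,
      |Tγ i j + (if i = j ∧ (i : ℕ) = K - 1 then γ else 0)|
        = |Tγ j i + (if j = i ∧ (j : ℕ) = K - 1 then γ else 0)| := by
    intro i j
    by_cases hij : i = j
    · subst hij; rfl
    · have h3 : Tγ j i = -Tγ i j := by
        rw [hT i j, hT j i]
        split_ifs <;> first | (exfalso; omega) | ring1
      rw [if_neg (fun h => hij h.1), if_neg (fun h => hij (h.1.symm)), h3, add_zero, add_zero,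
        abs_neg]
  have hrowT : ∀ i : Fin K,
      ∑ j, |Tγ i j + (if i = j ∧ (i : ℕ) = K - 1 then γ else 0)| ≤ C := by
    intro i
    have hcal : ∑ j, |Tγ i j + (if i = j ∧ (i : ℕ) = K - 1 then γ else 0)|
        ≤ ∑ j : Fin K, ((if (j : ℕ) = (i : ℕ) + 1 then (if (i : ℕ) = 0 then 1 else γ) else 0)
          + (if (j : ℕ) + 1 = (i : ℕ) then (if (i : ℕ) = 1 then 1 else γ) else 0)
          + (if j = i ∧ (i : ℕ) = K - 1 then γ else 0)) :=
      Finset.sum_le_sum fun j _ => habs i j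
    rw [Finset.sum_add_distrib, Finset.sum_add_distrib] at hcal
    have hc1 : (0:ℝ) ≤ (if (i : ℕ) = 0 then 1 else γ) := by split_ifs <;> linarith
    have hc2 : (0:ℝ) ≤ (if (i : ℕ) = 1 then 1 else γ) := by split_ifs <;> linarith
    have hs1 : ∑ j : Fin K, (if (j : ℕ) = (i : ℕ) + 1 then (if (i : ℕ) = 0 then 1 else γ) else 0)
        ≤ (if (i : ℕ) = 0 then 1 else γ) :=
      sum_ite_le hc1 _ (fun j k hj hk => by rw [Fin.ext_iff]; omega)
    have hs2 : ∑ j : Fin K, (if (j : ℕ) + 1 = (i : ℕ) then (if (i : ℕ) = 1 then 1 else γ) else 0)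
        ≤ (if (i : ℕ) = 1 then 1 else γ) :=
      sum_ite_le hc2 _ (fun j k hj hk => by rw [Fin.ext_iff]; omega)
    have hs3 : ∑ j : Fin K, (if j = i ∧ (i : ℕ) = K - 1 then γ else 0) ≤ γ :=
      sum_ite_le hγ.le _ (fun j k hj hk => by rw [hj.1, hk.1])
    have htot : ∑ j, |Tγ i j + (if i = j ∧ (i : ℕ) = K - 1 then γ else 0)|
        ≤ (if (i : ℕ) = 0 then 1 else γ) + (if (i : ℕ) = 1 then 1 else γ) + γ := by
      linarith
    by_cases h0 : (i : ℕ) = 0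
    · have h1 : ¬ ((i : ℕ) = 1) := by omega
      rw [if_pos h0, if_neg h1] at htot
      linarith
    · by_cases h1 : (i : ℕ) = 1
      · rw [if_neg h0, if_pos h1] at htot
        linarith
      · rw [if_neg h0, if_neg h1] at htot
        linarith
  have hDQrow : ∀ p : Fin K × Fin d, ∑ q, |(D + Q) p q| ≤ C := by
    intro p
    calc ∑ q, |(D + Q) p q|
        = ∑ j, ∑ b, |(Tγ p.1 j + (if p.1 = j ∧ (p.1 : ℕ) = K - 1 then γ else 0))
            * (if p.2 = b then 1 else 0)| := by
          rw [Fintype.sum_prod_type]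
          apply Finset.sum_congr rfl; intro j _
          apply Finset.sum_congr rfl; intro b _
          rw [hDQ p (j, b)]
      _ = ∑ j, |Tγ p.1 j + (if p.1 = j ∧ (p.1 : ℕ) = K - 1 then γ else 0)| := by
          apply Finset.sum_congr rfl; intro j _
          simp [mul_ite, mul_one, mul_zero, apply_ite abs, abs_zero, Finset.sum_ite_eq]
      _ ≤ C := hrowT p.1
  have hDQcol : ∀ q : Fin K × Fin d, ∑ p, |(D + Q) p q| ≤ C := by
    intro q
    calc ∑ p, |(D + Q) p q|
        = ∑ i, ∑ a, |(Tγ i q.1 + (if i = q.1 ∧ (i : ℕ) = K - 1 then γ else 0))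
            * (if a = q.2 then 1 else 0)| := by
          rw [Fintype.sum_prod_type]
          apply Finset.sum_congr rfl; intro i _
          apply Finset.sum_congr rfl; intro a _
          rw [hDQ (i, a) q]
      _ = ∑ i, |Tγ i q.1 + (if i = q.1 ∧ (i : ℕ) = K - 1 then γ else 0)| := by
          apply Finset.sum_congr rfl; intro i _
          simp [mul_ite, mul_one, mul_zero, apply_ite abs, abs_zero, Finset.sum_ite_eq']
      _ = ∑ i, |Tγ q.1 i + (if q.1 = i ∧ (q.1 : ℕ) = K - 1 then γ else 0)| := by
          apply Finset.sum_congr rfl; intro i _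
          rw [← hTsym q.1 i]
      _ ≤ C := hrowT q.1
  have hDQle : opNorm (D + Q) ≤ C := schur_bound _ hC0 hDQrow hDQcol
  -- bound for B z, any z
  have hBle : ∀ z, opNorm (B z) ≤ L := by
    intro z
    -- symmetry of the Hessian
    have hsym' : ∀ a b, Hess z a b = Hess z b a := by
      intro a b
      have h := congrFun (congrFun (hlow z).1 a) b
      by_cases hab : a = b
      · rw [hab]
      · simp [Matrix.conjTranspose_apply, Matrix.sub_apply, Matrix.smul_apply,
          Matrix.one_apply, hab, Ne.symm hab] at h
        linarith [h]
    have hsym : ∀ u v : Fin d → ℝ, u ⬝ᵥ (Hess z) *ᵥ v = v ⬝ᵥ (Hess z) *ᵥ u := by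
      intro u v
      simp only [dotProduct, Matrix.mulVec, Finset.mul_sum]
      rw [Finset.sum_comm]
      apply Finset.sum_congr rfl
      intro b _
      apply Finset.sum_congr rfl
      intro a _
      rw [hsym' b a]
      ring
    have hdot : ∀ u : Fin d → ℝ, 0 ≤ u ⬝ᵥ u :=
      fun u => Finset.sum_nonneg fun i _ => mul_self_nonneg _
    have hqu : ∀ u : Fin d → ℝ, u ⬝ᵥ (Hess z) *ᵥ u ≤ L * (u ⬝ᵥ u) := by
      intro u
      have h := (hupp z).dotProduct_mulVec_nonneg u
      simp only [star_trivial, Matrix.sub_mulVec, Matrix.smul_mulVec, Matrix.one_mulVec,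
        dotProduct_sub, dotProduct_smul, smul_eq_mul] at h
      linarith
    have hql : ∀ u : Fin d → ℝ, m * (u ⬝ᵥ u) ≤ u ⬝ᵥ (Hess z) *ᵥ u := by
      intro u
      have h := (hlow z).dotProduct_mulVec_nonneg u
      simp only [star_trivial, Matrix.sub_mulVec, Matrix.smul_mulVec, Matrix.one_mulVec,
        dotProduct_sub, dotProduct_smul, smul_eq_mul] at h
      linarith
    have hpos : ∀ u : Fin d → ℝ, 0 ≤ u ⬝ᵥ (Hess z) *ᵥ u := by
      intro u
      have := hql u
      nlinarith [hdot u]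
    apply opNorm_le_of_mulVec _ hL0
    intro xv
    have hmv : ∀ p : Fin K × Fin d, (B z *ᵥ xv) p
        = if (p.1 : ℕ) = 0 then ((Hess z) *ᵥ (fun b => xv (p.1, b))) p.2 else xv p := by
      intro p
      show ∑ q, B z p q * xv q = _
      rw [Fintype.sum_prod_type]
      have e : ∀ l : Fin K, ∀ b : Fin d, B z p (l, b) * xv (l, b)
          = if p.1 = l then ((if (p.1 : ℕ) = 0 then Hess z p.2 b
              else if p.2 = b then 1 else 0) * xv (l, b)) else 0 := by
        intro l b
        rw [hB]
        by_cases h : p.1 = l <;> simp [h]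
      simp_rw [e]
      have e2 : ∀ l : Fin K, (∑ b, if p.1 = l then ((if (p.1 : ℕ) = 0 then Hess z p.2 b
          else if p.2 = b then 1 else 0) * xv (l, b)) else 0)
          = if p.1 = l then (∑ b, (if (p.1 : ℕ) = 0 then Hess z p.2 b
              else if p.2 = b then 1 else 0) * xv (l, b)) else 0 := by
        intro l
        split_ifs <;> simp
      simp_rw [e2]
      rw [Finset.sum_ite_eq]
      simp only [Finset.mem_univ, if_true]
      by_cases h0 : (p.1 : ℕ) = 0
      · rw [if_pos h0]
        trans (∑ b, Hess z p.2 b * xv (p.1, b))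
        · exact Finset.sum_congr rfl (fun b _ => by rw [if_pos h0])
        · rfl
      · rw [if_neg h0]
        have e3 : ∀ b : Fin d, (if (p.1 : ℕ) = 0 then Hess z p.2 b
            else if p.2 = b then 1 else 0) * xv (p.1, b)
            = if p.2 = b then xv (p.1, b) else 0 := by
          intro b
          rw [if_neg h0]
          split_ifs <;> simp
        simp_rw [e3]
        rw [Finset.sum_ite_eq]
        simp
    rw [Fintype.sum_prod_type]
    have hk : ∀ k : Fin K, ∑ a, (B z *ᵥ xv) (k, a) ^ 2 ≤ L ^ 2 * ∑ a, xv (k, a) ^ 2 := by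
      intro k
      by_cases h0 : (k : ℕ) = 0
      · have e : ∀ a : Fin d, (B z *ᵥ xv) (k, a) = ((Hess z) *ᵥ (fun b => xv (k, b))) a := by
          intro a
          rw [hmv (k, a)]
          simp [h0]
        simp_rw [e]
        exact sym_sq_bound (Hess z) hL0 hsym hpos hqu _
      · have e : ∀ a : Fin d, (B z *ᵥ xv) (k, a) = xv (k, a) := by
          intro a
          rw [hmv (k, a)]
          simp [h0]
        simp_rw [e]
        have h1 : (1:ℝ) ≤ L ^ 2 := by nlinarith
        have h2 : (0:ℝ) ≤ ∑ a, xv (k, a) ^ 2 :=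
          Finset.sum_nonneg fun a _ => sq_nonneg _
        nlinarith
    calc ∑ k, ∑ a, (B z *ᵥ xv) (k, a) ^ 2 ≤ ∑ k, L ^ 2 * ∑ a, xv (k, a) ^ 2 :=
          Finset.sum_le_sum fun k _ => hk k
      _ = L ^ 2 * ∑ p : Fin K × Fin d, xv p ^ 2 := by
          rw [← Finset.mul_sum, Fintype.sum_prod_type]
  -- conclusion
  intro x
  rw [hJb x, opNorm_neg']
  calc opNorm ((D + Q) * B (x ⟨0, by omega⟩))
      ≤ opNorm (D + Q) * opNorm (B (x ⟨0, by omega⟩)) := opNorm_mul_le' _ _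
    _ ≤ C * L := mul_le_mul hDQle (hBle _) (opNorm_nonneg' _) hC0
    _ = L * C := mul_comm _ _
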